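/- Assume W satisfies (Nim): W(F) = +∞ if and only if det F ≤ 0. Then for all ξ₁, ξ₂ ∈ ℝ³, W_0(ξ₁|ξ₂) = +∞ if and only if ξ₁ ∧ ξ₂ = 0, where ξ₁ ∧ ξ₂ denotes the cross product of ξ₁ and ξ₂ and (ξ₁|ξ₂) denotes the 3×2 matrix with columns ξ₁, ξ₂. -/

import Mathlib

open scoped ENNReal
open MeasureTheory Filter

noncomputable section

attribute [local instance] Matrix.normedAddCommGroup

/-- `juxt ξ ζ` is the 3×3 matrix whose first two columns are the columns of the 3×2 matrix `ξ`
and whose third column is `ζ`, i.e. the matrix denoted `(ξ|ζ)` in the paper. -/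
def juxt (ξ : Matrix (Fin 3) (Fin 2) ℝ) (ζ : Fin 3 → ℝ) : Matrix (Fin 3) (Fin 3) ℝ :=
  Matrix.of fun i k => Fin.lastCases (ζ i) (fun j => ξ i j) k

/-- `W0 W ξ = inf_{ζ ∈ ℝ³} W (ξ|ζ)`. -/
def W0 (W : Matrix (Fin 3) (Fin 3) ℝ → ℝ≥0∞) (ξ : Matrix (Fin 3) (Fin 2) ℝ) : ℝ≥0∞ :=
  ⨅ ζ : Fin 3 → ℝ, W (juxt ξ ζ)

/-- `cols2 ξ₁ ξ₂` is the 3×2 matrix with columns `ξ₁` and `ξ₂`. -/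
def cols2 (ξ₁ ξ₂ : Fin 3 → ℝ) : Matrix (Fin 3) (Fin 2) ℝ :=
  Matrix.of fun i j => ![ξ₁ i, ξ₂ i] j

/-- The determinant of `(ξ₁|ξ₂|ζ)` equals `(ξ₁ × ξ₂) ⬝ ζ`. -/
lemma det_juxt_cols2 (ξ₁ ξ₂ ζ : Fin 3 → ℝ) :
    (juxt (cols2 ξ₁ ξ₂) ζ).det = dotProduct (crossProduct ξ₁ ξ₂) ζ := by
  have e0 : (0:Fin 3) = (0:Fin 2).castSucc := rfl
  have e1 : (1:Fin 3) = (1:Fin 2).castSucc := rfl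
  have e2 : (2:Fin 3) = Fin.last 2 := rfl
  simp only [Matrix.det_fin_three, juxt, cols2, Matrix.of_apply, e0, e1, e2,
    Fin.lastCases_castSucc, Fin.lastCases_last]
  simp [crossProduct, dotProduct, Fin.sum_univ_three]
  ring

/-- Lemma 2.2(ii): under (Nim), `W₀(ξ₁|ξ₂) = +∞` if and only if `ξ₁ ∧ ξ₂ = 0`. -/
theorem W0_eq_top_iff_cross_eq_zero (p C : ℝ) (hp : 1 < p) (hC : 0 < C)
    (W : Matrix (Fin 3) (Fin 3) ℝ → ℝ≥0∞)
    (hWcont : Continuous W)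
    (hWcoer : ∀ F : Matrix (Fin 3) (Fin 3) ℝ, ENNReal.ofReal (C * ‖F‖ ^ p) ≤ W F)
    (hNim : ∀ F : Matrix (Fin 3) (Fin 3) ℝ, W F = ⊤ ↔ F.det ≤ 0) :
    ∀ ξ₁ ξ₂ : Fin 3 → ℝ, W0 W (cols2 ξ₁ ξ₂) = ⊤ ↔ crossProduct ξ₁ ξ₂ = 0 := by
  intro ξ₁ ξ₂
  rw [W0, iInf_eq_top]
  constructor
  · intro h
    set c : Fin 3 → ℝ := crossProduct ξ₁ ξ₂ with hc
    have h1 := (hNim _).mp (h c)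
    rw [det_juxt_cols2] at h1
    have hnn : (0:ℝ) ≤ dotProduct c c :=
      Finset.sum_nonneg fun i _ => mul_self_nonneg (c i)
    exact dotProduct_self_eq_zero.mp (le_antisymm h1 hnn)
  · intro h ζ
    exact (hNim _).mpr (by rw [det_juxt_cols2, h, zero_dotProduct])
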